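/- There is an absolute constant c such that for every integer ℓ ≥ 1, every n ≥ 2, and every access sequence X = (x_1,…,x_m) ∈ [n]^m, there exists a binary search tree T on [n] with ℓ-DistTree_T(X) ≤ c·( Σ_{t=2}^m min_{max(1, t−ℓ) ≤ t' < t} log₂(|x_t − x_{t'}| + 2) + log₂ n ). -/

import Mathlib

/-- Binary trees with node labels of type `α`. -/
inductive BTree (α : Type) : Type where
  | leaf : BTree α
  | node : BTree α → α → BTree α → BTree α

namespace BTree

variable {α : Type} [LinearOrder α]

/-- The set of keys (node labels) of a binary tree. -/
def keys : BTree α → Finset α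
  | .leaf => ∅
  | .node l x r => insert x (keys l ∪ keys r)

/-- The binary-search-tree property: every node's label is greater than all labels
in its left subtree and smaller than all labels in its right subtree. -/
def IsBST : BTree α → Prop
  | .leaf => True
  | .node l x r => (∀ y ∈ keys l, y < x) ∧ (∀ y ∈ keys r, x < y) ∧ IsBST l ∧ IsBST r

/-- Depth (edge-distance from the root) of the node labeled `a` in a BST. -/
def depth : BTree α → α → ℕ
  | .leaf, _ => 0
  | .node l x r, a => if a = x then 0 else if a < x then depth l a + 1 else depth r a + 1

/-- Edge-distance between the nodes labeled `a` and `b` in a BST. -/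
def dist : BTree α → α → α → ℕ
  | .leaf, _, _ => 0
  | .node l x r, a, b =>
      if a = b then 0
      else if a < x ∧ b < x then dist l a b
      else if x < a ∧ x < b then dist r a b
      else depth (node l x r) a + depth (node l x r) b

/-- The key at the root, if any. -/
def root? : BTree α → Option α
  | .leaf => none
  | .node _ x _ => some x

end BTree

/-- `fingerPos X f init i t` is the position of finger `i` just before (0-indexed) time `t`:
the initial position `init i` if finger `i` has served no access so far, and otherwise
the last key it served. Here `f s` is the finger serving the access `X s`. -/
def fingerPos {α : Type} {k : ℕ} (X : ℕ → α) (f : ℕ → Fin k) (init : Fin k → α)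
    (i : Fin k) : ℕ → α
  | 0 => init i
  | t + 1 => if f t = i then X t else fingerPos X f init i t

/-- The cost of the `k`-finger strategy `(f, init)` serving the accesses
`X 0, …, X (m-1)` in the tree `T`: at each time we pay `1` plus the distance
travelled by the serving finger. -/
def fingerCost {α : Type} [LinearOrder α] (T : BTree α) (k m : ℕ) (X : ℕ → α)
    (f : ℕ → Fin k) (init : Fin k → α) : ℕ :=
  ∑ t ∈ Finset.range m, (1 + T.dist (fingerPos X f init (f t) t) (X t))

/-- `F^k_T(X)`: the optimal cost of serving `X 0, …, X (m-1)` in `T` with `k` fingers. -/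
noncomputable def fingerOpt {α : Type} [LinearOrder α] (T : BTree α) (k m : ℕ)
    (X : ℕ → α) : ℕ :=
  sInf {c : ℕ | ∃ (f : ℕ → Fin k) (init : Fin k → α), fingerCost T k m X f init = c}

/-- `ℓ-DistTree_T(x)` for a 1-indexed access sequence `x 1, …, x m`, where `x 0` is
(by convention in the theorems below) the root key of `T`:
`∑_{i=1}^m min_{max(0, i-ℓ) ≤ j < i} (d_T(x i, x j) + 1)`. -/
noncomputable def distTreeBound (T : BTree ℕ) (l m : ℕ) (x : ℕ → ℕ) : ℕ :=
  ∑ i ∈ Finset.Icc 1 m,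
    sInf {d : ℕ | ∃ j, i - l ≤ j ∧ j < i ∧ d = T.dist (x i) (x j) + 1}

namespace DyadicAux

/-- at most one multiple of `2^q` (shifted by `s`) in `[lo,hi]` -/
def Inv (s q lo hi : ℕ) : Prop :=
  ∀ ⦃c d : ℕ⦄, c ∈ Finset.Icc lo hi → d ∈ Finset.Icc lo hi →
    2^q ∣ (c+s) → 2^q ∣ (d+s) → c = d

def bld (s : ℕ) : ℕ → ℕ → ℕ → BTree ℕ
  | 0, lo, hi => if lo = hi then .node .leaf lo .leaf else .leaf
  | (q+1), lo, hi =>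
      if h : ((Finset.Icc lo hi).filter (fun c => 2^(q+1) ∣ (c+s))).Nonempty then
        .node (bld s q lo (((Finset.Icc lo hi).filter (fun c => 2^(q+1) ∣ (c+s))).min' h - 1))
          (((Finset.Icc lo hi).filter (fun c => 2^(q+1) ∣ (c+s))).min' h)
          (bld s q (((Finset.Icc lo hi).filter (fun c => 2^(q+1) ∣ (c+s))).min' h + 1) hi)
      else bld s q lo hi

lemma sub_inv {s q lo hi lo' hi' : ℕ} (hI : Inv s (q+1) lo hi)
    (h1 : lo ≤ lo') (h2 : hi' ≤ hi)
    (hno : ∀ c ∈ Finset.Icc lo' hi', ¬ 2^(q+1) ∣ (c+s)) : Inv s q lo' hi' := by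
  have key : ∀ c d : ℕ, c ∈ Finset.Icc lo' hi' → d ∈ Finset.Icc lo' hi' →
      2^q ∣ (c+s) → 2^q ∣ (d+s) → c < d → False := by
    intro c d hc hd hvc hvd hlt
    simp only [Finset.mem_Icc] at hc hd
    obtain ⟨u, hu⟩ := hvc
    obtain ⟨w, hw⟩ := hvd
    have h2q : 0 < 2^q := Nat.two_pow_pos q
    have hps : 2^(q+1) = 2^q * 2 := by rw [pow_succ]
    have hcu : u % 2 = 1 := by
      rcases Nat.even_or_odd u with he | ho
      · obtain ⟨k, hk⟩ := he
        exact absurd ⟨k, by rw [hu, hk, hps]; ring⟩ (hno c (Finset.mem_Icc.2 hc))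
      · exact Nat.odd_iff.mp ho
    have hdw : w % 2 = 1 := by
      rcases Nat.even_or_odd w with he | ho
      · obtain ⟨k, hk⟩ := he
        exact absurd ⟨k, by rw [hw, hk, hps]; ring⟩ (hno d (Finset.mem_Icc.2 hd))
      · exact Nat.odd_iff.mp ho
    have huw : u < w := by
      have : 2^q * u < 2^q * w := by omega
      exact lt_of_mul_lt_mul_left this (Nat.zero_le _)
    have hexp : 2^q * (u+1) = 2^q * u + 2^q := by ring
    have hmidlt : c + 2^q < d := by
      have huw2 : u + 1 < w := by omega
      have : 2^q * (u+1) < 2^q * w := by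
        exact mul_lt_mul_of_pos_left huw2 h2q
      omega
    have hmid : c + 2^q ∈ Finset.Icc lo' hi' := Finset.mem_Icc.2 ⟨by omega, by omega⟩
    apply hno _ hmid
    obtain ⟨k, hk⟩ : 2 ∣ (u+1) := by omega
    exact ⟨k, by rw [show c + 2^q + s = 2^q * (u+1) by omega, hk, hps]; ring⟩
  intro c d hc hd hvc hvd
  rcases lt_trichotomy c d with h | h | h
  · exact absurd (key c d hc hd hvc hvd h) (by simp)
  · exact h
  · exact absurd (key d c hd hc hvd hvc h) (by simp)

lemma inv_left {s q lo hi : ℕ} (hlo : 1 ≤ lo) (hI : Inv s (q+1) lo hi)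
    (h : ((Finset.Icc lo hi).filter (fun c => 2^(q+1) ∣ (c+s))).Nonempty) :
    Inv s q lo (((Finset.Icc lo hi).filter (fun c => 2^(q+1) ∣ (c+s))).min' h - 1) := by
  set m := ((Finset.Icc lo hi).filter (fun c => 2^(q+1) ∣ (c+s))).min' h with hm
  have hmem := Finset.min'_mem _ h
  rw [Finset.mem_filter] at hmem
  have hmIcc := Finset.mem_Icc.1 hmem.1
  apply sub_inv hI le_rfl (by omega)
  intro c hc hdvd
  have hc' := Finset.mem_Icc.1 hc
  have : c = m := hI (Finset.mem_Icc.2 ⟨hc'.1, by omega⟩) hmem.1 hdvd hmem.2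
  omega

lemma inv_right {s q lo hi : ℕ} (hI : Inv s (q+1) lo hi)
    (h : ((Finset.Icc lo hi).filter (fun c => 2^(q+1) ∣ (c+s))).Nonempty) :
    Inv s q (((Finset.Icc lo hi).filter (fun c => 2^(q+1) ∣ (c+s))).min' h + 1) hi := by
  set m := ((Finset.Icc lo hi).filter (fun c => 2^(q+1) ∣ (c+s))).min' h with hm
  have hmem := Finset.min'_mem _ h
  rw [Finset.mem_filter] at hmem
  apply sub_inv hI (by have := Finset.mem_Icc.1 hmem.1; omega) le_rfl
  intro c hc hdvd
  have hc' := Finset.mem_Icc.1 hc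
  have hclo : lo ≤ c := by have := Finset.mem_Icc.1 hmem.1; omega
  have : c = m := hI (Finset.mem_Icc.2 ⟨hclo, hc'.2⟩) hmem.1 hdvd hmem.2
  omega

lemma inv_pass {s q lo hi : ℕ} (hI : Inv s (q+1) lo hi)
    (h : ¬ ((Finset.Icc lo hi).filter (fun c => 2^(q+1) ∣ (c+s))).Nonempty) :
    Inv s q lo hi := by
  apply sub_inv hI le_rfl le_rfl
  intro c hc hdvd
  exact h ⟨c, Finset.mem_filter.2 ⟨hc, hdvd⟩⟩

end DyadicAux

namespace DyadicAux

lemma keys_bld {s : ℕ} : ∀ (q lo hi : ℕ), 1 ≤ lo → Inv s q lo hi →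
    (bld s q lo hi).keys = Finset.Icc lo hi := by
  intro q
  induction q with
  | zero =>
    intro lo hi hlo hI
    rw [bld]
    split_ifs with h
    · subst h
      simp [BTree.keys, Finset.Icc_self]
    · rcases Nat.lt_or_ge lo hi with hlt | hge
      · exact absurd (hI (Finset.mem_Icc.2 ⟨le_rfl, le_of_lt hlt⟩)
          (Finset.mem_Icc.2 ⟨le_of_lt hlt, le_rfl⟩) (one_dvd _) (one_dvd _)) h
      · have : hi < lo := lt_of_le_of_ne hge (Ne.symm h)
        simp [BTree.keys, Finset.Icc_eq_empty_of_lt this]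
  | succ q ih =>
    intro lo hi hlo hI
    rw [bld]
    split_ifs with h
    · set m := ((Finset.Icc lo hi).filter (fun c => 2^(q+1) ∣ (c+s))).min' h with hm
      have hmem := Finset.min'_mem _ h
      rw [Finset.mem_filter] at hmem
      have hmIcc := Finset.mem_Icc.1 hmem.1
      have kl := ih lo (m-1) hlo (inv_left hlo hI h)
      have kr := ih (m+1) hi (by omega) (inv_right hI h)
      show insert m ((bld s q lo (m-1)).keys ∪ (bld s q (m+1) hi).keys) = _
      rw [kl, kr]
      ext a
      simp only [Finset.mem_insert, Finset.mem_union, Finset.mem_Icc]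
      omega
    · exact ih lo hi hlo (inv_pass hI h)

lemma isBST_bld {s : ℕ} : ∀ (q lo hi : ℕ), 1 ≤ lo → Inv s q lo hi →
    (bld s q lo hi).IsBST := by
  intro q
  induction q with
  | zero =>
    intro lo hi hlo hI
    rw [bld]
    split_ifs with h
    · exact ⟨by simp [BTree.keys], by simp [BTree.keys], trivial, trivial⟩
    · trivial
  | succ q ih =>
    intro lo hi hlo hI
    rw [bld]
    split_ifs with h
    · set m := ((Finset.Icc lo hi).filter (fun c => 2^(q+1) ∣ (c+s))).min' h with hm
      have hmem := Finset.min'_mem _ h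
      rw [Finset.mem_filter] at hmem
      have hmIcc := Finset.mem_Icc.1 hmem.1
      have kl := keys_bld q lo (m-1) hlo (inv_left hlo hI h)
      have kr := keys_bld q (m+1) hi (by omega) (inv_right hI h)
      refine ⟨?_, ?_, ih lo (m-1) hlo (inv_left hlo hI h), ih (m+1) hi (by omega) (inv_right hI h)⟩
      · intro y hy
        rw [kl, Finset.mem_Icc] at hy
        omega
      · intro y hy
        rw [kr, Finset.mem_Icc] at hy
        omega
    · exact ih lo hi hlo (inv_pass hI h)

lemma depth_bld_le {s : ℕ} : ∀ (q lo hi a : ℕ), (bld s q lo hi).depth a ≤ q + 1 := by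
  intro q
  induction q with
  | zero =>
    intro lo hi a
    rw [bld]
    split_ifs with h
    · simp only [BTree.depth]
      split_ifs <;> simp [BTree.depth]
    · simp [BTree.depth]
  | succ q ih =>
    intro lo hi a
    rw [bld]
    split_ifs with h
    · simp only [BTree.depth]
      split_ifs with h1 h2
      · omega
      · exact Nat.add_le_add (ih lo _ a) le_rfl
      · exact Nat.add_le_add (ih _ hi a) le_rfl
    · have := ih lo hi a
      omega

/-- valuation, shifted max over value-interval -/
noncomputable def Qv (s a b : ℕ) : ℕ :=
  (Finset.Icc (min a b) (max a b)).sup (fun c => padicValNat 2 (c+s))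

lemma dist_bld_le {s : ℕ} : ∀ (q lo hi a b : ℕ), 1 ≤ lo → Inv s q lo hi →
    a ∈ Finset.Icc lo hi → b ∈ Finset.Icc lo hi →
    (bld s q lo hi).dist a b ≤ 2 * Qv s a b + 2 := by
  intro q
  induction q with
  | zero =>
    intro lo hi a b hlo hI ha hb
    have hab : a = b := hI ha hb (one_dvd _) (one_dvd _)
    subst hab
    rw [bld]
    split_ifs with h <;> simp [BTree.dist]
  | succ q ih =>
    intro lo hi a b hlo hI ha hb
    rw [bld]
    split_ifs with h
    · set m := ((Finset.Icc lo hi).filter (fun c => 2^(q+1) ∣ (c+s))).min' h with hm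
      have hmem := Finset.min'_mem _ h
      rw [Finset.mem_filter] at hmem
      have hmIcc := Finset.mem_Icc.1 hmem.1
      have ha' := Finset.mem_Icc.1 ha
      have hb' := Finset.mem_Icc.1 hb
      simp only [BTree.dist]
      split_ifs with h1 h2 h3
      · omega
      · exact ih lo (m-1) a b hlo (inv_left hlo hI h)
          (Finset.mem_Icc.2 ⟨ha'.1, by omega⟩) (Finset.mem_Icc.2 ⟨hb'.1, by omega⟩)
      · exact ih (m+1) hi a b (by omega) (inv_right hI h)
          (Finset.mem_Icc.2 ⟨by omega, ha'.2⟩) (Finset.mem_Icc.2 ⟨by omega, hb'.2⟩)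
      · -- split case: min a b ≤ m ≤ max a b
        have hmab : m ∈ Finset.Icc (min a b) (max a b) := Finset.mem_Icc.2 ⟨by omega, by omega⟩
        have hv : q + 1 ≤ padicValNat 2 (m + s) := by
          have hne : m + s ≠ 0 := by omega
          haveI : Fact (Nat.Prime 2) := ⟨Nat.prime_two⟩
          exact (padicValNat_dvd_iff_le hne).1 hmem.2
        have hQ : q + 1 ≤ Qv s a b := by
          unfold Qv
          exact le_trans hv (Finset.le_sup (f := fun c => padicValNat 2 (c+s)) hmab)
        have d1 : BTree.depth (.node (bld s q lo (m-1)) m (bld s q (m+1) hi)) a ≤ q + 2 := by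
          simp only [BTree.depth]
          split_ifs with g1 g2
          · omega
          · have := depth_bld_le (s := s) q lo (m-1) a
            omega
          · have := depth_bld_le (s := s) q (m+1) hi a
            omega
        have d2 : BTree.depth (.node (bld s q lo (m-1)) m (bld s q (m+1) hi)) b ≤ q + 2 := by
          simp only [BTree.depth]
          split_ifs with g1 g2
          · omega
          · have := depth_bld_le (s := s) q lo (m-1) b
            omega
          · have := depth_bld_le (s := s) q (m+1) hi b
            omega
        omega
    · exact ih lo hi a b hlo (inv_pass hI h) ha hb

end DyadicAux

namespace DyadicAux

lemma qv_le_K {K a b : ℕ} (ha : 1 ≤ a) (hb1 : 1 ≤ b) (hA : a + 1 ≤ 2^K) (hb : b + 1 ≤ 2^K)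
    (hs : s ∈ Finset.range (2^K)) :
    Qv s a b ≤ K := by
  have hs' := Finset.mem_range.1 hs
  apply Finset.sup_le
  intro c hc
  rw [Finset.mem_Icc] at hc
  by_contra hcon
  push_neg at hcon
  have h1 : 2^(K+1) ∣ (c + s) :=
    dvd_trans (pow_dvd_pow 2 hcon) pow_padicValNat_dvd
  have hcmin : min a b ≤ c := hc.1
  have h0 : 0 < c + s := by omega
  have h2 : 2^(K+1) ≤ c + s := Nat.le_of_dvd h0 h1
  have h3 : c ≤ max a b := hc.2
  have hab : max a b < 2^K := by omega
  have : (2:ℕ)^(K+1) = 2 * 2^K := by rw [pow_succ]; ring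
  omega

lemma count_le {K j a b : ℕ} (hj1 : 1 ≤ j) (hjK : j ≤ K) (hab : a ≤ b) (hb : b + 1 ≤ 2^K) :
    ((Finset.range (2^K)).filter (fun s => j ≤ Qv s a b)).card
      ≤ (b - a + 1) * 2^(K+1-j) := by
  have hsub : ((Finset.range (2^K)).filter (fun s => j ≤ Qv s a b)) ⊆
      (Finset.Icc a b).biUnion (fun c => (Finset.range (2^K)).filter (fun s => 2^j ∣ (c+s))) := by
    intro s hs
    rw [Finset.mem_filter] at hs
    have hsup := hs.2
    unfold Qv at hsup
    obtain ⟨c, hc, hcj⟩ := (Finset.le_sup_iff (show (0:ℕ) < j by omega)).1 hsup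
    rw [Finset.mem_biUnion]
    refine ⟨c, by rwa [min_eq_left hab, max_eq_right hab] at hc, ?_⟩
    rw [Finset.mem_filter]
    exact ⟨hs.1, dvd_trans (pow_dvd_pow 2 hcj) pow_padicValNat_dvd⟩
  calc ((Finset.range (2^K)).filter (fun s => j ≤ Qv s a b)).card
      ≤ _ := Finset.card_le_card hsub
    _ ≤ ∑ c ∈ Finset.Icc a b,
          ((Finset.range (2^K)).filter (fun s => 2^j ∣ (c+s))).card := Finset.card_biUnion_le
    _ ≤ ∑ c ∈ Finset.Icc a b, 2^(K+1-j) := by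
        apply Finset.sum_le_sum
        intro c hc
        have hc' := Finset.mem_Icc.1 hc
        have hcard : ((Finset.range (2^K)).filter (fun s => 2^j ∣ (c+s))).card
            ≤ (Finset.range (2^(K+1-j))).card := by
          apply Finset.card_le_card_of_injOn (fun s => (c+s)/2^j)
          · intro s hs
            simp only [Finset.coe_filter, Set.mem_setOf_eq, Finset.mem_range] at hs
            rw [Finset.mem_coe, Finset.mem_range]
            apply Nat.div_lt_of_lt_mul
            have e1 : (2:ℕ)^j * 2^(K+1-j) = 2^(K+1) := by
              rw [← pow_add]
              congr 1
              omega
            have e2 : (2:ℕ)^(K+1) = 2 * 2^K := by rw [pow_succ]; ring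
            omega
          · intro s1 hs1 s2 hs2 heq
            simp only [Finset.coe_filter, Set.mem_setOf_eq, Finset.mem_range] at hs1 hs2
            obtain ⟨q1, hq1⟩ := hs1.2
            obtain ⟨q2, hq2⟩ := hs2.2
            simp only [hq1, hq2] at heq
            have h2j : 0 < 2^j := Nat.two_pow_pos j
            rw [Nat.mul_div_cancel_left q1 h2j, Nat.mul_div_cancel_left q2 h2j] at heq
            subst heq
            omega
        simpa using hcard
    _ = (b - a + 1) * 2^(K+1-j) := by
        rw [Finset.sum_const, Nat.card_Icc, smul_eq_mul]
        congr 1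
        omega

lemma geo_sum (lam : ℕ) : ∀ K, (∑ j ∈ Finset.Icc (lam+1) K, 2^(K+1+lam-j)) + 2^(lam+1) ≤ 2^(K+1) + 2^(lam+1) ∧
    (lam ≤ K → (∑ j ∈ Finset.Icc (lam+1) K, 2^(K+1+lam-j)) + 2^(lam+1) ≤ 2^(K+1)) := by
  intro K
  induction K with
  | zero =>
    constructor
    · simp
    · intro h
      interval_cases lam
      simp
  | succ K ih =>
    by_cases hK : lam + 1 ≤ K + 1
    · rw [Finset.sum_Icc_succ_top hK]
      have step : ∑ j ∈ Finset.Icc (lam+1) K, 2^(K+1+1+lam-j)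
          = 2 * ∑ j ∈ Finset.Icc (lam+1) K, 2^(K+1+lam-j) := by
        rw [Finset.mul_sum]
        apply Finset.sum_congr rfl
        intro j hj
        have hj' := Finset.mem_Icc.1 hj
        rw [show K+1+1+lam-j = (K+1+lam-j)+1 by omega, pow_succ]
        ring
      constructor
      · have := (ih.2 (by omega))
        have hn : K+1+1+lam-(K+1) = lam+1 := by omega
        rw [step, hn]
        omega
      · intro _
        have := (ih.2 (by omega))
        have hn : K+1+1+lam-(K+1) = lam+1 := by omega
        rw [step, hn]
        have h2 : (2:ℕ)^(K+1+1) = 2 * 2^(K+1) := by rw [pow_succ]; ring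
        omega
    · have : Finset.Icc (lam+1) (K+1) = ∅ := Finset.Icc_eq_empty (by omega)
      rw [this]
      constructor
      · simp
      · intro h
        have : lam = K + 1 := by omega
        subst this
        simp

end DyadicAux

namespace DyadicAux

lemma sum_qv_le {K a b : ℕ} (ha : 1 ≤ a) (hb1 : 1 ≤ b) (hA : a + 1 ≤ 2^K) (hb : b + 1 ≤ 2^K)
    (hab : a ≤ b) :
    ∑ s ∈ Finset.range (2^K), Qv s a b ≤ 2^K * (Nat.log 2 (b - a + 1) + 3) := by
  set L := b - a + 1 with hL
  set lam := Nat.log 2 L + 1 with hlam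
  have hLlam : L < 2^lam := Nat.lt_pow_succ_log_self (by norm_num) L
  have stepA : ∀ s ∈ Finset.range (2^K), Qv s a b ≤
      ∑ j ∈ Finset.Icc 1 K, (if j ≤ Qv s a b then 1 else 0) := by
    intro s hs
    have hQK := qv_le_K ha hb1 hA hb hs
    calc Qv s a b = ∑ j ∈ Finset.Icc 1 (Qv s a b), 1 := by simp
      _ = ∑ j ∈ Finset.Icc 1 (Qv s a b), (if j ≤ Qv s a b then 1 else 0) := by
          apply Finset.sum_congr rfl
          intro j hj
          rw [if_pos (Finset.mem_Icc.1 hj).2]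
      _ ≤ _ := Finset.sum_le_sum_of_subset (Finset.Icc_subset_Icc_right hQK)
  calc ∑ s ∈ Finset.range (2^K), Qv s a b
      ≤ ∑ s ∈ Finset.range (2^K), ∑ j ∈ Finset.Icc 1 K, (if j ≤ Qv s a b then 1 else 0) :=
        Finset.sum_le_sum stepA
    _ = ∑ j ∈ Finset.Icc 1 K, ∑ s ∈ Finset.range (2^K), (if j ≤ Qv s a b then 1 else 0) :=
        Finset.sum_comm
    _ = ∑ j ∈ Finset.Icc 1 K, ((Finset.range (2^K)).filter (fun s => j ≤ Qv s a b)).card := by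
        apply Finset.sum_congr rfl
        intro j _
        rw [Finset.card_filter]
    _ ≤ ∑ j ∈ Finset.Icc 1 K, (if j ≤ lam then 2^K else 2^(K+1+lam-j)) := by
        apply Finset.sum_le_sum
        intro j hj
        have hj' := Finset.mem_Icc.1 hj
        split_ifs with hcase
        · exact le_trans (Finset.card_filter_le _ _) (by rw [Finset.card_range])
        · calc ((Finset.range (2^K)).filter (fun s => j ≤ Qv s a b)).card
              ≤ L * 2^(K+1-j) := count_le hj'.1 hj'.2 hab hb
            _ ≤ 2^lam * 2^(K+1-j) := Nat.mul_le_mul_right _ (le_of_lt hLlam)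
            _ = 2^(K+1+lam-j) := by
                rw [← pow_add]
                congr 1
                omega
    _ ≤ lam * 2^K + 2^(K+1) := by
        rw [← Finset.sum_filter_add_sum_filter_not (Finset.Icc 1 K) (fun j => j ≤ lam)]
        have h1 : ∑ j ∈ (Finset.Icc 1 K).filter (fun j => j ≤ lam),
            (if j ≤ lam then 2^K else 2^(K+1+lam-j)) ≤ lam * 2^K := by
          calc _ = ∑ j ∈ (Finset.Icc 1 K).filter (fun j => j ≤ lam), (2^K : ℕ) := by
                apply Finset.sum_congr rfl
                intro j hj
                rw [if_pos (Finset.mem_filter.1 hj).2]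
            _ = ((Finset.Icc 1 K).filter (fun j => j ≤ lam)).card * 2^K := by
                rw [Finset.sum_const, smul_eq_mul]
            _ ≤ lam * 2^K := by
                apply Nat.mul_le_mul_right
                calc ((Finset.Icc 1 K).filter (fun j => j ≤ lam)).card
                    ≤ (Finset.Icc 1 lam).card := by
                      apply Finset.card_le_card
                      intro j hj
                      rw [Finset.mem_filter, Finset.mem_Icc] at hj
                      exact Finset.mem_Icc.2 ⟨hj.1.1, hj.2⟩
                  _ = lam := by rw [Nat.card_Icc]; omega
        have h2 : ∑ j ∈ (Finset.Icc 1 K).filter (fun j => ¬ j ≤ lam),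
            (if j ≤ lam then 2^K else 2^(K+1+lam-j)) ≤ 2^(K+1) := by
          calc _ = ∑ j ∈ (Finset.Icc 1 K).filter (fun j => ¬ j ≤ lam), 2^(K+1+lam-j) := by
                apply Finset.sum_congr rfl
                intro j hj
                rw [if_neg (Finset.mem_filter.1 hj).2]
            _ ≤ ∑ j ∈ Finset.Icc (lam+1) K, 2^(K+1+lam-j) := by
                apply Finset.sum_le_sum_of_subset
                intro j hj
                rw [Finset.mem_filter, Finset.mem_Icc] at hj
                exact Finset.mem_Icc.2 ⟨by omega, hj.1.2⟩
            _ ≤ 2^(K+1) := by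
                by_cases hlamK : lam ≤ K
                · have := (geo_sum lam K).2 hlamK
                  omega
                · have : Finset.Icc (lam+1) K = ∅ := Finset.Icc_eq_empty (by omega)
                  rw [this]
                  simp
        omega
    _ ≤ 2^K * (Nat.log 2 L + 3) := by
        have : (2:ℕ)^(K+1) = 2^K * 2 := by rw [pow_succ]
        rw [hlam] at *
        nlinarith [Nat.two_pow_pos K]

end DyadicAux

namespace DyadicAux

lemma qv_symm (s a b : ℕ) : Qv s a b = Qv s b a := by
  unfold Qv
  rw [min_comm, max_comm]

lemma sum_qv_le' {K a b : ℕ} (ha : 1 ≤ a) (hb1 : 1 ≤ b) (hA : a + 1 ≤ 2^K) (hb : b + 1 ≤ 2^K) :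
    ∑ s ∈ Finset.range (2^K), Qv s a b
      ≤ 2^K * (Nat.log 2 (max a b - min a b + 1) + 3) := by
  rcases le_total a b with h | h
  · rw [max_eq_right h, min_eq_left h]
    exact sum_qv_le ha hb1 hA hb h
  · rw [max_eq_left h, min_eq_right h]
    calc ∑ s ∈ Finset.range (2^K), Qv s a b
        = ∑ s ∈ Finset.range (2^K), Qv s b a := by
          apply Finset.sum_congr rfl
          intro s _
          rw [qv_symm]
      _ ≤ _ := sum_qv_le hb1 ha hb hA h

lemma inv_top {s K n : ℕ} (hn : n + 1 ≤ 2^K) : Inv s K 1 n := by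
  rintro c d hc hd ⟨u, hu⟩ ⟨w, hw⟩
  rw [Finset.mem_Icc] at hc hd
  rcases lt_trichotomy u w with h | h | h
  · have h2 : 2^K * (u+1) ≤ 2^K * w := Nat.mul_le_mul_left _ (by omega)
    have h3 : 2^K * (u+1) = 2^K * u + 2^K := by ring
    omega
  · subst h
    omega
  · have h2 : 2^K * (w+1) ≤ 2^K * u := Nat.mul_le_mul_left _ (by omega)
    have h3 : 2^K * (w+1) = 2^K * w + 2^K := by ring
    omega

lemma dist_to_root {l r : BTree ℕ} {k a : ℕ} :
    (BTree.node l k r).dist a k ≤ (BTree.node l k r).depth a := by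
  have hdk : (BTree.node l k r).depth k = 0 := by simp [BTree.depth]
  show (if a = k then 0
      else if a < k ∧ k < k then l.dist a k
      else if k < a ∧ k < k then r.dist a k
      else (BTree.node l k r).depth a + (BTree.node l k r).depth k) ≤ _
  split_ifs with h1 h2 h3
  · exact Nat.zero_le _
  · exact absurd h2.2 (lt_irrefl k)
  · exact absurd h3.2 (lt_irrefl k)
  · rw [hdk]
    omega

lemma lognat_le_logb (k N : ℕ) (h : 2^k ≤ N) : (k : ℝ) ≤ Real.logb 2 N := by
  have hN : (0:ℝ) < N := by
    have : 0 < N := lt_of_lt_of_le (Nat.two_pow_pos k) h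
    exact_mod_cast this
  have h2k : ((2:ℝ))^k ≤ (N:ℝ) := by exact_mod_cast h
  have := Real.logb_le_logb (show (1:ℝ) < 2 by norm_num)
    (show (0:ℝ) < (2:ℝ)^k by positivity) hN |>.2 h2k
  calc (k:ℝ) = Real.logb 2 ((2:ℝ)^k) := by
        rw [Real.logb_pow, Real.logb_self_eq_one (by norm_num)]
        ring
    _ ≤ Real.logb 2 N := this

lemma one_le_logb {z : ℝ} (h : 2 ≤ z) : 1 ≤ Real.logb 2 z := by
  have := Real.logb_le_logb (show (1:ℝ) < 2 by norm_num)
    (show (0:ℝ) < 2 by norm_num) (by linarith) |>.2 h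
  rwa [Real.logb_self_eq_one (by norm_num)] at this

lemma abs_cast_sub (a b : ℕ) : |(a:ℝ) - (b:ℝ)| = ((max a b - min a b : ℕ) : ℝ) := by
  rcases le_total a b with h | h
  · rw [max_eq_right h, min_eq_left h, Nat.cast_sub h, abs_sub_comm,
      abs_of_nonneg (by simp only [sub_nonneg]; exact_mod_cast h)]
  · rw [max_eq_left h, min_eq_right h, Nat.cast_sub h,
      abs_of_nonneg (by simp only [sub_nonneg]; exact_mod_cast h)]

end DyadicAux

/-- The RHS inner set. -/
def Sset (x : ℕ → ℕ) (l t : ℕ) : Set ℝ :=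
  {y : ℝ | ∃ t', max 1 (t - l) ≤ t' ∧ t' < t ∧
    y = Real.logb 2 (|(x t : ℝ) - (x t' : ℝ)| + 2)}


/-- There is an absolute constant `c` such that for every `ℓ ≥ 1`, `n ≥ 2`,
and every access sequence `x 1, …, x m ∈ [n]`, there is a BST `T` on `[n]` (with root key `root`)
with `ℓ-DistTree_T(X) ≤ c·( Σ_{t=2}^m min_{max(1, t−ℓ) ≤ t' < t} log₂(|x t − x t'| + 2) + log₂ n )`. -/
theorem stmt1 : ∃ c : ℝ, ∀ (l n m : ℕ), 1 ≤ l → 2 ≤ n →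
    ∀ x : ℕ → ℕ, (∀ i, 1 ≤ i → i ≤ m → x i ∈ Finset.Icc 1 n) →
    ∃ (T : BTree ℕ) (root : ℕ), T.IsBST ∧ T.keys = Finset.Icc 1 n ∧ T.root? = some root ∧
      (distTreeBound T l m (fun i => if i = 0 then root else x i) : ℝ) ≤
        c * ((∑ t ∈ Finset.Icc 2 m,
              sInf {y : ℝ | ∃ t', max 1 (t - l) ≤ t' ∧ t' < t ∧
                y = Real.logb 2 (|(x t : ℝ) - (x t' : ℝ)| + 2)}) +
            Real.logb 2 n) := by
  classical
  use 100
  intro l n m hl hn x hx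
  set K := Nat.clog 2 (n+1) with hKdef
  have hK : n + 1 ≤ 2^K := Nat.le_pow_clog (by norm_num) _
  have hKlog : K ≤ Nat.log 2 n + 2 := by
    have h1 : n < 2^(Nat.log 2 n + 1) := Nat.lt_pow_succ_log_self (by norm_num) n
    have h2 : n + 1 ≤ 2^(Nat.log 2 n + 2) := by
      have : (2:ℕ)^(Nat.log 2 n + 2) = 2 * 2^(Nat.log 2 n + 1) := by rw [pow_succ]; ring
      omega
    exact (Nat.clog_le_iff_le_pow (by norm_num)).2 h2
  have hlogn : (1:ℝ) ≤ Real.logb 2 n := DyadicAux.one_le_logb (by exact_mod_cast hn)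
  -- minimizers of the RHS inner sets
  have hSmem : ∀ t, 2 ≤ t → t ≤ m → sInf (Sset x l t) ∈ Sset x l t := by
    intro t h2 hm
    have heq : Sset x l t = (fun t' => Real.logb 2 (|(x t:ℝ) - (x t':ℝ)| + 2)) ''
        (Set.Ico (max 1 (t-l)) t) := by
      ext y
      simp only [Sset, Set.mem_image, Set.mem_Ico, Set.mem_setOf_eq]
      constructor
      · rintro ⟨t', ha, hb, rfl⟩
        exact ⟨t', ⟨ha, hb⟩, rfl⟩
      · rintro ⟨t', ⟨ha, hb⟩, rfl⟩
        exact ⟨t', ha, hb, rfl⟩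
    rw [heq]
    apply Set.Nonempty.csInf_mem
    · exact ⟨_, ⟨t-1, ⟨by omega, by omega⟩, rfl⟩⟩
    · exact (Set.finite_Ico _ _).image _
  have hchoice : ∀ t, ∃ t', (2 ≤ t ∧ t ≤ m) → (max 1 (t - l) ≤ t' ∧ t' < t ∧
      sInf (Sset x l t) = Real.logb 2 (|(x t : ℝ) - (x t' : ℝ)| + 2)) := by
    intro t
    by_cases h : 2 ≤ t ∧ t ≤ m
    · obtain ⟨t', h1, h2, h3⟩ := hSmem t h.1 h.2
      exact ⟨t', fun _ => ⟨h1, h2, h3⟩⟩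
    · exact ⟨0, fun hc => absurd hc h⟩
  choose p hp using hchoice
  set Lt : ℕ → ℕ := fun t => max (x t) (x (p t)) - min (x t) (x (p t)) + 1 with hLtdef
  set Bnd : ℕ → ℕ := fun t => 2 * (Nat.log 2 (Lt t) + 3) + 2 with hBnddef
  have hxmem : ∀ t, 2 ≤ t → t ≤ m →
      x t ∈ Finset.Icc 1 n ∧ x (p t) ∈ Finset.Icc 1 n := by
    intro t h2 hm
    obtain ⟨ha, hb, _⟩ := hp t ⟨h2, hm⟩
    exact ⟨hx t (by omega) hm, hx (p t) (by omega) (by omega)⟩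
  -- averaging over shifts
  obtain ⟨s0, hs0mem, hs0⟩ : ∃ s0 ∈ Finset.range (2^K),
      (∑ t ∈ Finset.Icc 2 m, (DyadicAux.bld s0 K 1 n).dist (x t) (x (p t)))
        ≤ ∑ t ∈ Finset.Icc 2 m, Bnd t := by
    apply Finset.exists_le_of_sum_le
    · exact ⟨0, Finset.mem_range.2 (Nat.two_pow_pos K)⟩
    calc ∑ s ∈ Finset.range (2^K),
          (∑ t ∈ Finset.Icc 2 m, (DyadicAux.bld s K 1 n).dist (x t) (x (p t)))
        = ∑ t ∈ Finset.Icc 2 m,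
            (∑ s ∈ Finset.range (2^K), (DyadicAux.bld s K 1 n).dist (x t) (x (p t))) :=
          Finset.sum_comm
      _ ≤ ∑ t ∈ Finset.Icc 2 m, 2^K * Bnd t := by
          apply Finset.sum_le_sum
          intro t ht
          have ht' := Finset.mem_Icc.1 ht
          obtain ⟨hm1, hm2⟩ := hxmem t ht'.1 ht'.2
          have hm1' := Finset.mem_Icc.1 hm1
          have hm2' := Finset.mem_Icc.1 hm2
          calc ∑ s ∈ Finset.range (2^K), (DyadicAux.bld s K 1 n).dist (x t) (x (p t))
              ≤ ∑ s ∈ Finset.range (2^K), (2 * DyadicAux.Qv s (x t) (x (p t)) + 2) := by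
                apply Finset.sum_le_sum
                intro s _
                exact DyadicAux.dist_bld_le K 1 n (x t) (x (p t)) le_rfl
                  (DyadicAux.inv_top hK) hm1 hm2
            _ = 2 * (∑ s ∈ Finset.range (2^K), DyadicAux.Qv s (x t) (x (p t))) + 2^K * 2 := by
                rw [Finset.sum_add_distrib, ← Finset.mul_sum, Finset.sum_const,
                  Finset.card_range, smul_eq_mul]
            _ ≤ 2 * (2^K * (Nat.log 2 (Lt t) + 3)) + 2^K * 2 := by
                have := DyadicAux.sum_qv_le' (K := K) hm1'.1 hm2'.1 (by omega) (by omega)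
                exact Nat.add_le_add_right (Nat.mul_le_mul_left 2 this) _
            _ = 2^K * Bnd t := by rw [hBnddef]; ring
      _ = 2^K * (∑ t ∈ Finset.Icc 2 m, Bnd t) := by rw [← Finset.mul_sum]
      _ = ∑ _s ∈ Finset.range (2^K), (∑ t ∈ Finset.Icc 2 m, Bnd t) := by
          rw [Finset.sum_const, Finset.card_range, smul_eq_mul]
  -- the tree
  have hInv : DyadicAux.Inv s0 K 1 n := DyadicAux.inv_top hK
  have hkeys := DyadicAux.keys_bld (s := s0) K 1 n le_rfl hInv
  have hbst := DyadicAux.isBST_bld (s := s0) K 1 n le_rfl hInv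
  obtain ⟨l0, rt, r0, hT⟩ : ∃ l0 rt r0, DyadicAux.bld s0 K 1 n = BTree.node l0 rt r0 := by
    cases h : DyadicAux.bld s0 K 1 n with
    | leaf =>
      exfalso
      rw [h] at hkeys
      have h1 : (1:ℕ) ∈ Finset.Icc 1 n := Finset.mem_Icc.2 ⟨le_rfl, by omega⟩
      rw [← hkeys] at h1
      simp [BTree.keys] at h1
    | node a b c => exact ⟨a, b, c, rfl⟩
  refine ⟨DyadicAux.bld s0 K 1 n, rt, hbst, hkeys, by rw [hT]; rfl, ?_⟩
  show (distTreeBound _ l m _ : ℝ) ≤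
    100 * ((∑ t ∈ Finset.Icc 2 m, sInf (Sset x l t)) + Real.logb 2 n)
  have hR1 : ∀ t ∈ Finset.Icc 2 m, (1:ℝ) ≤ sInf (Sset x l t) := by
    intro t ht
    have ht' := Finset.mem_Icc.1 ht
    obtain ⟨_, _, hpeq⟩ := hp t ⟨ht'.1, ht'.2⟩
    rw [hpeq]
    apply DyadicAux.one_le_logb
    have := abs_nonneg ((x t:ℝ) - (x (p t) : ℝ))
    linarith
  have hSsum0 : (0:ℝ) ≤ ∑ t ∈ Finset.Icc 2 m, sInf (Sset x l t) :=
    Finset.sum_nonneg (fun t ht => le_trans zero_le_one (hR1 t ht))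
  by_cases hm0 : m = 0
  · subst hm0
    have hzero : distTreeBound (DyadicAux.bld s0 K 1 n) l 0
        (fun i => if i = 0 then rt else x i) = 0 := by
      unfold distTreeBound
      rw [show Finset.Icc 1 0 = ∅ from Finset.Icc_eq_empty (by omega)]
      simp
    rw [hzero]
    have : Finset.Icc 2 0 = ∅ := Finset.Icc_eq_empty (by omega)
    rw [this]
    simp only [Finset.sum_empty, Nat.cast_zero]
    linarith
  -- main case
  have hm1 : 1 ≤ m := by omega
  have hsplit : Finset.Icc 1 m = insert 1 (Finset.Icc 2 m) := by
    ext j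
    simp only [Finset.mem_insert, Finset.mem_Icc]
    omega
  have h1notin : (1:ℕ) ∉ Finset.Icc 2 m := by simp
  set T := DyadicAux.bld s0 K 1 n with hTdef
  set x' : ℕ → ℕ := fun i => if i = 0 then rt else x i with hx'def
  have hterm1 : sInf {d : ℕ | ∃ j, 1 - l ≤ j ∧ j < 1 ∧ d = T.dist (x' 1) (x' j) + 1}
      ≤ K + 2 := by
    have hmem : (T.dist (x' 1) (x' 0) + 1) ∈
        {d : ℕ | ∃ j, 1 - l ≤ j ∧ j < 1 ∧ d = T.dist (x' 1) (x' j) + 1} :=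
      ⟨0, by omega, by omega, rfl⟩
    have hle := Nat.sInf_le hmem
    have hx0 : x' 0 = rt := by simp [hx'def]
    have hx1 : x' 1 = x 1 := by simp [hx'def]
    have hdr : T.dist (x 1) rt ≤ K + 1 := by
      calc T.dist (x 1) rt = (BTree.node l0 rt r0).dist (x 1) rt := by rw [hT]
        _ ≤ (BTree.node l0 rt r0).depth (x 1) := DyadicAux.dist_to_root
        _ = T.depth (x 1) := by rw [hT]
        _ ≤ K + 1 := DyadicAux.depth_bld_le K 1 n (x 1)
    have hdr2 : T.dist (x' 1) (x' 0) + 1 ≤ K + 2 := by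
      rw [hx0, hx1]
      omega
    exact le_trans hle hdr2
  have htermt : ∀ t ∈ Finset.Icc 2 m,
      sInf {d : ℕ | ∃ j, t - l ≤ j ∧ j < t ∧ d = T.dist (x' t) (x' j) + 1}
        ≤ T.dist (x t) (x (p t)) + 1 := by
    intro t ht
    have ht' := Finset.mem_Icc.1 ht
    obtain ⟨hpa, hpb, _⟩ := hp t ⟨ht'.1, ht'.2⟩
    apply Nat.sInf_le
    refine ⟨p t, by omega, hpb, ?_⟩
    have e1 : x' t = x t := by simp only [hx'def]; rw [if_neg (by omega)]
    have e2 : x' (p t) = x (p t) := by simp only [hx'def]; rw [if_neg (by omega)]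
    rw [e1, e2]
  have hchain : distTreeBound T l m x'
      ≤ (K + 2) + ∑ t ∈ Finset.Icc 2 m, (T.dist (x t) (x (p t)) + 1) := by
    unfold distTreeBound
    rw [hsplit, Finset.sum_insert h1notin]
    exact Nat.add_le_add hterm1 (Finset.sum_le_sum htermt)
  have hchain2 : ∑ t ∈ Finset.Icc 2 m, (T.dist (x t) (x (p t)) + 1)
      ≤ ∑ t ∈ Finset.Icc 2 m, (Bnd t + 1) := by
    rw [Finset.sum_add_distrib, Finset.sum_add_distrib]
    exact Nat.add_le_add_right hs0 _
  have hnat : distTreeBound T l m x' ≤ (K + 2) + ∑ t ∈ Finset.Icc 2 m, (Bnd t + 1) := by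
    omega
  -- real-side bounds
  have hreal1 : ((K:ℝ) + 2) ≤ 5 * Real.logb 2 n := by
    have h1 : (Nat.log 2 n : ℝ) ≤ Real.logb 2 n :=
      DyadicAux.lognat_le_logb _ n (Nat.pow_log_le_self 2 (by omega))
    have h2 : (K:ℝ) ≤ (Nat.log 2 n : ℝ) + 2 := by exact_mod_cast hKlog
    linarith
  have hrealt : ∀ t ∈ Finset.Icc 2 m, ((Bnd t : ℝ) + 1) ≤ 11 * sInf (Sset x l t) := by
    intro t ht
    have ht' := Finset.mem_Icc.1 ht
    obtain ⟨hpa, hpb, hpeq⟩ := hp t ⟨ht'.1, ht'.2⟩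
    have habs2 : |(x t:ℝ) - (x (p t):ℝ)| + 2 = ((Lt t : ℕ) : ℝ) + 1 := by
      rw [DyadicAux.abs_cast_sub]
      have : (Lt t : ℝ) = ((max (x t) (x (p t)) - min (x t) (x (p t)) : ℕ) : ℝ) + 1 := by
        rw [hLtdef]
        push_cast
        ring
      rw [this]
      ring
    have hR1t : 1 ≤ sInf (Sset x l t) := hR1 t ht
    have hlog : (Nat.log 2 (Lt t) : ℝ) ≤ sInf (Sset x l t) := by
      rw [hpeq, habs2]
      have hc : ((Lt t : ℕ) : ℝ) + 1 = ((Lt t + 1 : ℕ) : ℝ) := by push_cast; ring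
      rw [hc]
      apply DyadicAux.lognat_le_logb
      have := Nat.pow_log_le_self 2 (show Lt t ≠ 0 by simp [hLtdef])
      omega
    have hBndval : (Bnd t : ℝ) = 2 * ((Nat.log 2 (Lt t) : ℝ) + 3) + 2 := by
      rw [hBnddef]
      push_cast
      ring
    rw [hBndval]
    linarith
  calc (distTreeBound T l m x' : ℝ)
      ≤ (((K + 2) + ∑ t ∈ Finset.Icc 2 m, (Bnd t + 1) : ℕ) : ℝ) := by exact_mod_cast hnat
    _ = ((K:ℝ) + 2) + ∑ t ∈ Finset.Icc 2 m, ((Bnd t : ℝ) + 1) := by push_cast; ring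
    _ ≤ 5 * Real.logb 2 n + ∑ t ∈ Finset.Icc 2 m, (11 * sInf (Sset x l t)) :=
        add_le_add hreal1 (Finset.sum_le_sum hrealt)
    _ = 5 * Real.logb 2 n + 11 * ∑ t ∈ Finset.Icc 2 m, sInf (Sset x l t) := by
        rw [Finset.mul_sum]
    _ ≤ 100 * ((∑ t ∈ Finset.Icc 2 m, sInf (Sset x l t)) + Real.logb 2 n) := by
        linarith
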